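/- Let b > 0, c > 0, q₀ ∈ (0,1), and let S : ℝ → ℝ satisfy 0 < S(u) < 1 for all u. Let (u,v,w) be a solution of the fast system (2) and set w̄ = √2·b. If at some time τ, 0 < v(τ) < 1 and w(τ) > w̄, then there exists t ∈ (τ, τ + √2/b] with v(t) ≥ 1; if instead 0 < v(τ) < 1 and w(τ) < −w̄, then there exists t ∈ (τ, τ + √2/b] with v(t) ≤ 0. In particular, if |w(τ)| > w̄ and 0 < v(τ) < 1, then v leaves the interval (0,1) at some time after τ. -/

import Mathlib

open Filter Topology

/-- `r = (u,v,w)` solves the fast system (2). -/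
def SolFast (b : ℝ) (S : ℝ → ℝ) (q₀ c : ℝ) (u v w : ℝ → ℝ) : Prop :=
  ∀ t : ℝ,
    HasDerivAt u ((v t - u t) / c) t ∧
    HasDerivAt v (w t) t ∧
    HasDerivAt w (b ^ 2 * (v t - q₀ * S (u t))) t

/-- Mean value style bound: if `f' ≥ C` on `(a,b)` then `C*(t-a) ≤ f t - f a` on `[a,b]`. -/
lemma deriv_lower_bound {f f' : ℝ → ℝ} {a b C : ℝ}
    (hf : ∀ t, HasDerivAt f (f' t) t) (hC : ∀ t ∈ Set.Ioo a b, C ≤ f' t) :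
    ∀ t ∈ Set.Icc a b, C * (t - a) ≤ f t - f a := by
  intro t ht
  rcases le_or_gt b a with hba | hab
  · have : t = a := le_antisymm (ht.2.trans hba) ht.1
    simp [this]
  · have hcont : ContinuousOn f (Set.Icc a b) :=
      fun x _ => ((hf x).differentiableAt.continuousAt).continuousWithinAt
    have hdiff : DifferentiableOn ℝ f (interior (Set.Icc a b)) :=
      fun x _ => ((hf x).differentiableAt).differentiableWithinAt
    have hge : ∀ x ∈ interior (Set.Icc a b), C ≤ deriv f x := by
      intro x hx
      rw [(hf x).deriv]
      exact hC x (by rwa [interior_Icc] at hx)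
    exact (convex_Icc a b).mul_sub_le_image_sub_of_le_deriv hcont hdiff hge a
      (Set.left_mem_Icc.2 hab.le) t ht ht.1

/-- Key one-sided lemma: if `v' = w`, `w' = g` with `g ≥ -b²` whenever `v ≥ 0`,
and `w τ > √2 b`, `0 < v τ < 1`, then `v` reaches `1` within time `√2/b`. -/
lemma reaches_one (b : ℝ) (hb : 0 < b) (v w g : ℝ → ℝ)
    (hv : ∀ t, HasDerivAt v (w t) t) (hw : ∀ t, HasDerivAt w (g t) t)
    (hg : ∀ t, 0 ≤ v t → -(b ^ 2) ≤ g t) (τ : ℝ)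
    (hv0 : 0 < v τ) (hwτ : Real.sqrt 2 * b < w τ) :
    ∃ t : ℝ, τ < t ∧ t ≤ τ + Real.sqrt 2 / b ∧ 1 ≤ v t := by
  set T : ℝ := Real.sqrt 2 / b with hT
  have hs2 : (0:ℝ) < Real.sqrt 2 := Real.sqrt_pos.2 (by norm_num)
  have hTpos : 0 < T := div_pos hs2 hb
  by_contra hcon
  push_neg at hcon
  have H : ∀ t, τ < t → t ≤ τ + T → v t < 1 := by
    intro t h1 h2
    by_contra h
    exact absurd (le_of_not_gt h) (by have := hcon t h1 h2; push_neg; linarith)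
  -- first: w ≥ w τ - b² (t - τ) on any subinterval where v > 0 on the open part.
  have keyw : ∀ t₁ ∈ Set.Icc τ (τ + T), (∀ s ∈ Set.Ioo τ t₁, 0 ≤ v s) →
      ∀ t ∈ Set.Icc τ t₁, w τ - b ^ 2 * (t - τ) ≤ w t := by
    intro t₁ _ hpos t ht
    have := deriv_lower_bound (f := w) (f' := g) (a := τ) (b := t₁) (C := -(b ^ 2)) hw
      (fun s hs => hg s (hpos s hs)) t ht
    linarith
  -- v stays positive on [τ, τ+T]
  have hvpos : ∀ t ∈ Set.Icc τ (τ + T), 0 < v t := by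
    by_contra hc
    push_neg at hc
    obtain ⟨t₀', ht₀', hvt₀'⟩ := hc
    set E : Set ℝ := {t ∈ Set.Icc τ (τ + T) | v t ≤ 0} with hE
    have hEne : E.Nonempty := ⟨t₀', ht₀', hvt₀'⟩
    have hEclosed : IsClosed E := by
      have hvc : Continuous v :=
        continuous_iff_continuousAt.2 fun x => (hv x).differentiableAt.continuousAt
      exact isClosed_Icc.inter (isClosed_le hvc continuous_const)
    have hEbdd : BddBelow E := ⟨τ, fun x hx => hx.1.1⟩
    set t₀ : ℝ := sInf E with ht₀
    have ht₀E : t₀ ∈ E := hEclosed.csInf_mem hEne hEbdd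
    have hτt₀ : τ < t₀ := by
      rcases lt_or_eq_of_le (ht₀E.1.1) with h | h
      · exact h
      · exact absurd ht₀E.2 (by rw [← h]; linarith)
    have hbefore : ∀ s ∈ Set.Ioo τ t₀, 0 ≤ v s := by
      intro s hs
      by_contra h
      push_neg at h
      have hsE : s ∈ E := ⟨⟨hs.1.le, hs.2.le.trans ht₀E.1.2⟩, h.le⟩
      exact absurd (csInf_le hEbdd hsE) (not_le.2 hs.2)
    have ht₀Icc : t₀ ∈ Set.Icc τ (τ + T) := ht₀E.1
    -- w ≥ 0 on [τ, t₀]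
    have hwge : ∀ t ∈ Set.Ioo τ t₀, 0 ≤ w t := by
      intro t ht
      have h1 := keyw t₀ ht₀Icc hbefore t ⟨ht.1.le, ht.2.le⟩
      have h2 : t - τ ≤ T := by
        have := ht.2.le.trans ht₀Icc.2; linarith
      have h3 : b ^ 2 * (t - τ) ≤ b ^ 2 * T := by nlinarith
      have h4 : b ^ 2 * T = Real.sqrt 2 * b := by
        rw [hT]; field_simp
      nlinarith
    have := deriv_lower_bound (f := v) (f' := w) (a := τ) (b := t₀) (C := 0) hv hwge
      t₀ (Set.right_mem_Icc.2 hτt₀.le)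
    have : 0 ≤ v t₀ - v τ := by linarith [this]
    linarith [ht₀E.2]
  -- hence w bound on all of [τ, τ+T]
  have hwall : ∀ t ∈ Set.Icc τ (τ + T), w τ - b ^ 2 * (t - τ) ≤ w t :=
    keyw (τ + T) (Set.right_mem_Icc.2 (by linarith)) (fun s hs => (hvpos s ⟨hs.1.le, hs.2.le⟩).le)
  -- quadratic lower bound on v at τ + T
  set f : ℝ → ℝ := fun t => v t - w τ * t + b ^ 2 * (t - τ) ^ 2 / 2 with hf
  have hf' : ∀ t, HasDerivAt f (w t - w τ + b ^ 2 * (t - τ)) t := by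
    intro t
    have h1 : HasDerivAt (fun t : ℝ => w τ * t) (w τ) t := by
      simpa using (hasDerivAt_id t).const_mul (w τ)
    have h2 : HasDerivAt (fun t : ℝ => b ^ 2 * (t - τ) ^ 2 / 2) (b ^ 2 * (t - τ)) t := by
      have : HasDerivAt (fun t : ℝ => (t - τ) ^ 2) (2 * (t - τ)) t := by
        simpa using ((hasDerivAt_id t).sub_const τ).fun_pow 2
      have := (this.const_mul (b ^ 2)).div_const 2
      exact this.congr_deriv (by ring)
    have := ((hv t).sub h1).add h2
    exact this
  have hfge : ∀ t ∈ Set.Ioo τ (τ + T), (0:ℝ) ≤ w t - w τ + b ^ 2 * (t - τ) := by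
    intro t ht
    have := hwall t ⟨ht.1.le, ht.2.le⟩
    linarith
  have hfinal := deriv_lower_bound (f := f) (f' := fun t => w t - w τ + b ^ 2 * (t - τ))
    (a := τ) (b := τ + T) (C := 0) hf' hfge (τ + T) (Set.right_mem_Icc.2 (by linarith))
  -- unfold f
  have hT2 : b ^ 2 * T ^ 2 / 2 = 1 := by
    rw [hT]
    rw [div_pow, Real.sq_sqrt (by norm_num : (2:ℝ) ≥ 0)]
    field_simp
  have hwT : Real.sqrt 2 * b * T = 2 := by
    have h2 : Real.sqrt 2 * Real.sqrt 2 = 2 := Real.mul_self_sqrt (by norm_num)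
    rw [hT]
    field_simp
    try nlinarith [h2]
  have hvend : v (τ + T) < 1 := H (τ + T) (by linarith) le_rfl
  have hexp : v (τ + T) - w τ * (τ + T) + b ^ 2 * T ^ 2 / 2 - (v τ - w τ * τ) ≥ 0 := by
    have : f (τ + T) - f τ ≥ 0 := by linarith [hfinal]
    simp only [hf] at this
    have h0 : (τ + T - τ) = T := by ring
    rw [h0] at this
    nlinarith [this]
  have hwτT : w τ * T > 2 := by
    calc w τ * T > Real.sqrt 2 * b * T := by
          apply mul_lt_mul_of_pos_right hwτ hTpos
      _ = 2 := hwT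
  nlinarith [hexp, hwτT, hvend, hv0]

/-- Lemma 14 of the paper: if `|w| > √2 b` while `0 < v < 1`,
then `v` leaves `(0,1)` within time `√2 / b`. -/
theorem v_leaves_unit_interval (b c q₀ : ℝ) (S : ℝ → ℝ)
    (hb : 0 < b) (hc : 0 < c) (hq₀ : 0 < q₀) (hq₀' : q₀ < 1)
    (hSpos : ∀ x : ℝ, 0 < S x) (hSlt : ∀ x : ℝ, S x < 1)
    (u v w : ℝ → ℝ) (hr : SolFast b S q₀ c u v w) (τ : ℝ)
    (hv0 : 0 < v τ) (hv1 : v τ < 1) :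
    (Real.sqrt 2 * b < w τ →
      ∃ t : ℝ, τ < t ∧ t ≤ τ + Real.sqrt 2 / b ∧ 1 ≤ v t) ∧
    (w τ < -(Real.sqrt 2 * b) →
      ∃ t : ℝ, τ < t ∧ t ≤ τ + Real.sqrt 2 / b ∧ v t ≤ 0) := by
  have hv' : ∀ t, HasDerivAt v (w t) t := fun t => (hr t).2.1
  have hw' : ∀ t, HasDerivAt w (b ^ 2 * (v t - q₀ * S (u t))) t := fun t => (hr t).2.2
  have hqS : ∀ t, 0 < q₀ * S (u t) ∧ q₀ * S (u t) < 1 := by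
    intro t
    constructor
    · exact mul_pos hq₀ (hSpos _)
    · calc q₀ * S (u t) < q₀ * 1 := by
            exact mul_lt_mul_of_pos_left (hSlt _) hq₀
        _ < 1 := by linarith
  constructor
  · intro hwτ
    exact reaches_one b hb v w (fun t => b ^ 2 * (v t - q₀ * S (u t))) hv' hw'
      (fun t ht => by
        show -(b ^ 2) ≤ b ^ 2 * (v t - q₀ * S (u t))
        nlinarith [(hqS t).2, sq_nonneg b,
          mul_nonneg (sq_nonneg b) (show (0:ℝ) ≤ v t - q₀ * S (u t) + 1 by
            linarith [(hqS t).2])]) τ hv0 hwτ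
  · intro hwτ
    -- apply to reflected system v̂ = 1 - v, ŵ = -w
    have hv'' : ∀ t, HasDerivAt (fun s => 1 - v s) (-(w t)) t := by
      intro t
      simpa using (hv' t).const_sub 1
    have hw'' : ∀ t, HasDerivAt (fun s => -(w s)) (-(b ^ 2 * (v t - q₀ * S (u t)))) t :=
      fun t => (hw' t).neg
    have hg : ∀ t, 0 ≤ (fun s => 1 - v s) t → -(b ^ 2) ≤ -(b ^ 2 * (v t - q₀ * S (u t))) := by
      intro t ht
      have ht' : (0:ℝ) ≤ 1 - v t := ht
      nlinarith [(hqS t).1, sq_nonneg b,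
        mul_nonneg (sq_nonneg b) (show (0:ℝ) ≤ 1 - v t + q₀ * S (u t) by
          linarith [(hqS t).1])]
    have hwτ' : Real.sqrt 2 * b < (fun s => -(w s)) τ := by
      show Real.sqrt 2 * b < -(w τ); linarith
    obtain ⟨t, h1, h2, h3⟩ := reaches_one b hb (fun s => 1 - v s) (fun s => -(w s))
      (fun s => -(b ^ 2 * (v s - q₀ * S (u s)))) hv'' hw'' hg τ (by show (0:ℝ) < 1 - v τ; linarith) hwτ'
    have h3' : (1:ℝ) ≤ 1 - v t := h3
    exact ⟨t, h1, h2, by linarith⟩
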